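/- For every k ∈ ℕ, every n ≥ 1 and all p, q ∈ D(k), the number of functions i : Fin (2k) → Fin n satisfying i ∘ p = i and i ∘ q = i equals n^{l(p,q)}; in other words, the Gram matrix entry G_{kn}(p,q) = n^{l(p,q)} is the scalar product of the delta functions associated to p and q. -/

import Mathlib

open scoped BigOperators

/-- Non-crossing pair partitions of {1,…,2k}: fixed-point-free non-crossing
involutions of `Fin (2*k)`. -/
def NCPair (k : ℕ) : Type :=
  {p : Equiv.Perm (Fin (2 * k)) //
    (∀ x, p (p x) = x) ∧ (∀ x, p x ≠ x) ∧
    ∀ a b c d : Fin (2 * k), a < b → b < c → c < d → p a = c → p b = d → False}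

instance (k : ℕ) : Fintype (NCPair k) := by unfold NCPair; infer_instance

instance (k : ℕ) : DecidableEq (NCPair k) := by unfold NCPair; infer_instance

/-- `loops p q`: the number of loops obtained by closing the composed diagram,
i.e. the number of orbits of the subgroup generated by `p` and `q` on `Fin (2*k)`. -/
noncomputable def loops {k : ℕ} (p q : NCPair k) : ℕ :=
  Nat.card (MulAction.orbitRel.Quotient
    (↥(Subgroup.closure ({p.1, q.1} : Set (Equiv.Perm (Fin (2 * k)))))) (Fin (2 * k)))

/-- The Gram matrix `G_{kn}(p,q) = n^{l(p,q)}`. -/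
noncomputable def Gram (k n : ℕ) : Matrix (NCPair k) (NCPair k) ℝ :=
  fun p q => (n : ℝ) ^ loops p q

/-- The loop distance `d(p,q) = k - l(p,q)`. -/
noncomputable def loopDist {k : ℕ} (p q : NCPair k) : ℕ := k - loops p q

/-- The number of multi-indices i : Fin (2k) → Fin n invariant under both p and q
equals n^{l(p,q)}: the Gram matrix entry is the scalar product of delta functions. -/
theorem card_fixed_indices (k n : ℕ) (hn : 1 ≤ n) (p q : NCPair k) :
    Fintype.card {i : Fin (2 * k) → Fin n // i ∘ p.1 = i ∧ i ∘ q.1 = i}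
      = n ^ loops p q := by
  classical
  set G := Subgroup.closure ({p.1, q.1} : Set (Equiv.Perm (Fin (2 * k)))) with hG
  -- any function fixed by p and q is fixed by every element of G
  have key : ∀ (i : Fin (2*k) → Fin n), i ∘ p.1 = i → i ∘ q.1 = i →
      ∀ g : Equiv.Perm (Fin (2*k)), g ∈ G → ∀ x, i (g x) = i x := by
    intro i hp hq
    let S : Subgroup (Equiv.Perm (Fin (2*k))) :=
      { carrier := {g | ∀ x, i (g x) = i x}
        one_mem' := fun x => rfl
        mul_mem' := by
          intro a b ha hb x
          simp only [Equiv.Perm.mul_apply]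
          exact (ha (b x)).trans (hb x)
        inv_mem' := by
          intro a ha x
          have := ha (a⁻¹ x)
          rw [show a (a⁻¹ x) = x from a.apply_symm_apply x] at this; exact this.symm }
    have hle : G ≤ S := by
      rw [hG]
      apply Subgroup.closure_le S |>.mpr
      rintro g (rfl | rfl)
      · exact fun x => congrFun hp x
      · exact fun x => congrFun hq x
    exact fun g hg => hle hg
  let Q := MulAction.orbitRel.Quotient (↥G) (Fin (2 * k))
  have e : {i : Fin (2 * k) → Fin n // i ∘ p.1 = i ∧ i ∘ q.1 = i} ≃ (Q → Fin n) :=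
    { toFun := fun i => Quotient.lift i.1 (by
        rintro x y ⟨g, rfl⟩
        exact key i.1 i.2.1 i.2.2 g.1 g.2 y)
      invFun := fun f =>
        ⟨fun x => f (Quotient.mk'' x), by
          constructor <;> funext x
          · exact congrArg f (Quotient.sound ⟨⟨p.1, Subgroup.subset_closure (by simp)⟩, rfl⟩)
          · exact congrArg f (Quotient.sound ⟨⟨q.1, Subgroup.subset_closure (by simp)⟩, rfl⟩)⟩
      left_inv := fun i => Subtype.ext rfl
      right_inv := fun f => funext fun x => Quotient.inductionOn x fun a => rfl }
  rw [Fintype.card_congr e, Fintype.card_fun]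
  unfold loops
  rw [Nat.card_eq_fintype_card]
  simp [Q, hG]
  rfl
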